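/- Let P₀,...,P_m (m ≥ 1) be a symmetric Clifford system on ℝ^{2l} given in standard block form by P₀(u,v) = (u,-v), P₁(u,v) = (v,u), P_{1+α}(u,v) = (E_α v, -E_α u) for skew-symmetric orthogonal anticommuting E_α. Suppose l > 2m. Then there exist a point z ∈ S^{2l-1} with ⟨P_i z, z⟩ = 0 for all i, and two orthonormal tangent vectors X, Y at z (i.e., ⟨X,z⟩ = ⟨Y,z⟩ = 0 and X, Y tangent to M₊) such that 1 + Σ_{α=0}^{m} ⟨P_α X, X⟩⟨P_α Y, Y⟩ - Σ_{α=0}^{m} ⟨P_α X, Y⟩² = -1. -/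

import Mathlib

open Matrix

/-- The symmetric Clifford system of OT-FKM type in standard block form, acting on
`ℝ^l ⊕ ℝ^l`: `P₀(u,v) = (u,-v)`, `P₁(u,v) = (v,u)`, `P_{1+α}(u,v) = (E_α v, -E_α u)`. -/
def cliffordP {l m : ℕ} (E : Fin (m - 1) → Matrix (Fin l) (Fin l) ℝ)
    (i : Fin (m + 1)) (z : (Fin l → ℝ) × (Fin l → ℝ)) : (Fin l → ℝ) × (Fin l → ℝ) :=
  if i.val = 0 then (z.1, -z.2)
  else if i.val = 1 then (z.2, z.1)
  else if h : 2 ≤ i.val then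
    ((E ⟨i.val - 2, by have := i.isLt; omega⟩).mulVec z.2,
      -((E ⟨i.val - 2, by have := i.isLt; omega⟩).mulVec z.1))
  else (0, 0)

/-- The inner product on `ℝ^l ⊕ ℝ^l`. -/
def pairDot {l : ℕ} (x y : (Fin l → ℝ) × (Fin l → ℝ)) : ℝ :=
  x.1 ⬝ᵥ y.1 + x.2 ⬝ᵥ y.2

lemma dot_eq_inner {l : ℕ} (x y : EuclideanSpace ℝ (Fin l)) :
    x ⬝ᵥ y = inner (𝕜 := ℝ) x y := by
  simp [dotProduct, PiLp.inner_apply, RCLike.inner_apply, mul_comm]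

lemma exists_unit_orth {l : ℕ} {ι : Type} [Fintype ι] (hcard : Fintype.card ι < l)
    (v : ι → (Fin l → ℝ)) :
    ∃ c : Fin l → ℝ, c ⬝ᵥ c = 1 ∧ ∀ i, v i ⬝ᵥ c = 0 := by
  classical
  set Eu := EuclideanSpace ℝ (Fin l) with hEu
  set v' : ι → Eu := fun i => WithLp.toLp 2 (v i) with hv'
  set K : Submodule ℝ Eu := Submodule.span ℝ (Set.range v') with hK
  have hKne : K ≠ ⊤ := by
    intro h
    have := finrank_le_of_span_eq_top (R := ℝ) (M := Eu) (v := v') h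
    rw [finrank_euclideanSpace, Fintype.card_fin] at this
    omega
  have hbot : Kᗮ ≠ ⊥ := by
    simp only [ne_eq, Submodule.orthogonal_eq_bot_iff]
    exact hKne
  obtain ⟨u, hu, hune⟩ := Submodule.exists_mem_ne_zero_of_ne_bot hbot
  have hnu : ‖u‖ ≠ 0 := norm_ne_zero_iff.mpr hune
  refine ⟨(‖u‖⁻¹ • u : Eu), ?_, ?_⟩
  · show ((‖u‖⁻¹ • u : Eu) : Fin l → ℝ) ⬝ᵥ ((‖u‖⁻¹ • u : Eu) : Fin l → ℝ) = 1
    rw [dot_eq_inner, real_inner_smul_left, real_inner_smul_right, real_inner_self_eq_norm_sq]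
    field_simp
  · intro i
    have hvK : v' i ∈ K := Submodule.subset_span (Set.mem_range_self i)
    have hinner : inner (𝕜 := ℝ) (v' i) u = 0 :=
      Submodule.inner_right_of_mem_orthogonal hvK hu
    show (v' i : Fin l → ℝ) ⬝ᵥ ((‖u‖⁻¹ • u : Eu) : Fin l → ℝ) = 0
    rw [dot_eq_inner, real_inner_smul_right, hinner, mul_zero]

theorem stmt9 (l m : ℕ) (hm : 1 ≤ m) (hlm : 2 * m < l)
    (E : Fin (m - 1) → Matrix (Fin l) (Fin l) ℝ)
    (hskew : ∀ α, (E α)ᵀ = -E α)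
    (horth : ∀ α, E α * (E α)ᵀ = 1)
    (hE : ∀ α β, E α * E β + E β * E α = if α = β then (-2 : ℝ) • 1 else 0) :
    ∃ z X Y : (Fin l → ℝ) × (Fin l → ℝ),
      pairDot z z = 1 ∧ (∀ i, pairDot (cliffordP E i z) z = 0) ∧
      pairDot X X = 1 ∧ pairDot Y Y = 1 ∧ pairDot X Y = 0 ∧
      pairDot X z = 0 ∧ pairDot Y z = 0 ∧
      (∀ i, pairDot (cliffordP E i z) X = 0) ∧
      (∀ i, pairDot (cliffordP E i z) Y = 0) ∧
      1 + (∑ α : Fin (m + 1), pairDot (cliffordP E α X) X * pairDot (cliffordP E α Y) Y)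
        - (∑ α : Fin (m + 1), (pairDot (cliffordP E α X) Y) ^ 2) = -1 := by
  classical
  have hl : 0 < l := by omega
  -- first vector a
  set a : Fin l → ℝ := fun j => if j = ⟨0, hl⟩ then (1 : ℝ) else 0 with ha_def
  have haa : a ⬝ᵥ a = 1 := by
    simp [ha_def, dotProduct, Finset.sum_ite_eq']
  -- second vector b, orthogonal to a and to E_α a
  obtain ⟨b, hbb, hb0⟩ := exists_unit_orth (ι := Option (Fin (m - 1)))
    (by simp; omega)
    (fun o => o.elim a (fun α => (E α).mulVec a))
  have hab : a ⬝ᵥ b = 0 := hb0 none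
  have hEab : ∀ α, (E α).mulVec a ⬝ᵥ b = 0 := fun α => hb0 (some α)
  -- third vector c, orthogonal to a, b, E_α a, E_α b
  obtain ⟨c, hcc, hc0⟩ := exists_unit_orth (ι := Bool × Option (Fin (m - 1)))
    (by simp; omega)
    (fun p => p.2.elim (if p.1 then a else b) (fun α => (E α).mulVec (if p.1 then a else b)))
  have hac : a ⬝ᵥ c = 0 := by simpa using hc0 (true, none)
  have hbc : b ⬝ᵥ c = 0 := by simpa using hc0 (false, none)
  have hEac : ∀ α, (E α).mulVec a ⬝ᵥ c = 0 := fun α => by simpa using hc0 (true, some α)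
  have hEbc : ∀ α, (E α).mulVec b ⬝ᵥ c = 0 := fun α => by simpa using hc0 (false, some α)
  -- derived facts
  have hba : b ⬝ᵥ a = 0 := by rw [dotProduct_comm]; exact hab
  have hEba : ∀ α, (E α).mulVec b ⬝ᵥ a = 0 := by
    intro α
    rw [dotProduct_comm, dotProduct_mulVec, ← mulVec_transpose, hskew, neg_mulVec,
      neg_dotProduct, hEab α, neg_zero]
  have hEcc : ∀ α, (E α).mulVec c ⬝ᵥ c = 0 := by
    intro α
    have h : (E α).mulVec c ⬝ᵥ c = -((E α).mulVec c ⬝ᵥ c) := by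
      conv_lhs => rw [dotProduct_comm, dotProduct_mulVec, ← mulVec_transpose, hskew,
        neg_mulVec, neg_dotProduct]
    linarith
  set s : ℝ := (Real.sqrt 2)⁻¹ with hs_def
  have hs : s * s = 1 / 2 := by
    rw [hs_def, ← mul_inv, Real.mul_self_sqrt (by norm_num)]
    norm_num
  refine ⟨(s • a, s • b), (c, 0), (0, c), ?_, ?_, ?_, ?_, ?_, ?_, ?_, ?_, ?_, ?_⟩
  · simp only [pairDot, smul_dotProduct, dotProduct_smul, haa, hbb, smul_eq_mul]
    linear_combination 2 * hs
  · intro i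
    obtain ⟨iv, hiv⟩ := i
    rcases iv with _ | _ | k
    · simp only [cliffordP, pairDot]
      simp [smul_dotProduct, dotProduct_smul, haa, hbb, smul_eq_mul]
    · simp only [cliffordP, pairDot]
      simp [smul_dotProduct, dotProduct_smul, hab, hba, smul_eq_mul]
    · simp only [cliffordP, pairDot]
      simp [mulVec_smul, smul_dotProduct, dotProduct_smul, hEab, hEba, smul_eq_mul]
  · simp [pairDot, hcc]
  · simp [pairDot, hcc]
  · simp [pairDot]
  · simp [pairDot, smul_eq_mul, dotProduct_smul, dotProduct_comm c a, hac]
  · simp [pairDot, smul_eq_mul, dotProduct_smul, dotProduct_comm c b, hbc]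
  · intro i
    obtain ⟨iv, hiv⟩ := i
    rcases iv with _ | _ | k
    · simp only [cliffordP, pairDot]
      simp [smul_dotProduct, hac]
    · simp only [cliffordP, pairDot]
      simp [smul_dotProduct, hbc]
    · simp only [cliffordP, pairDot]
      simp [mulVec_smul, smul_dotProduct, hEbc]
  · intro i
    obtain ⟨iv, hiv⟩ := i
    rcases iv with _ | _ | k
    · simp only [cliffordP, pairDot]
      simp [smul_dotProduct, hbc]
    · simp only [cliffordP, pairDot]
      simp [smul_dotProduct, hac]
    · simp only [cliffordP, pairDot]
      simp [mulVec_smul, smul_dotProduct, hEac]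
  · have h1 : (∑ α : Fin (m + 1),
        pairDot (cliffordP E α (c, 0)) (c, 0) * pairDot (cliffordP E α (0, c)) (0, c))
        = ∑ α : Fin (m + 1), (if α = ⟨0, by omega⟩ then (-1 : ℝ) else 0) := by
      refine Finset.sum_congr rfl (fun α _ => ?_)
      obtain ⟨av, hav⟩ := α
      rcases av with _ | _ | k
      · simp only [cliffordP, pairDot]
        simp [hcc]
      · simp only [cliffordP, pairDot]
        simp [Fin.ext_iff]
      · simp only [cliffordP, pairDot]
        simp [Fin.ext_iff]
    have h2 : (∑ α : Fin (m + 1), (pairDot (cliffordP E α (c, 0)) (0, c)) ^ 2)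
        = ∑ α : Fin (m + 1), (if α = ⟨1, by omega⟩ then (1 : ℝ) else 0) := by
      refine Finset.sum_congr rfl (fun α _ => ?_)
      obtain ⟨av, hav⟩ := α
      rcases av with _ | _ | k
      · simp only [cliffordP, pairDot]
        simp [Fin.ext_iff]
      · simp only [cliffordP, pairDot]
        simp [hcc]
      · simp only [cliffordP, pairDot]
        simp [Fin.ext_iff, hEcc]
    rw [h1, h2, Finset.sum_ite_eq' _ (⟨0, by omega⟩ : Fin (m + 1)),
      Finset.sum_ite_eq' _ (⟨1, by omega⟩ : Fin (m + 1))]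
    simp
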